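/- Let W_n be a Binomial(n, p) random variable with p ∈ (0,1), ξ ∈ (0,1), and let (γ_ℓ)_{ℓ≥1} be a positive nonincreasing sequence. Then E[γ_{W_n+1}²] ≤ exp(−½ ξ² p n) γ_1² + γ_{⌊(1−ξ)pn⌋+2}². -/

import Mathlib

-- key analytic inequality: (1-ξ) log(1-ξ) + ξ - ξ²/2 ≥ 0 on [0,1)
lemma f_nonneg {ξ : ℝ} (h0 : 0 ≤ ξ) (h1 : ξ < 1) :
    0 ≤ (1 - ξ) * Real.log (1 - ξ) + ξ - ξ ^ 2 / 2 := by
  set f : ℝ → ℝ := fun x => (1 - x) * Real.log (1 - x) + x - x ^ 2 / 2 with hf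
  have hderiv : ∀ x ∈ Set.Ico (0:ℝ) 1, HasDerivAt f (-Real.log (1 - x) - x) x := by
    intro x hx
    have hx1 : (1:ℝ) - x ≠ 0 := by have := hx.2; intro h; nlinarith
    have h1 : HasDerivAt (fun y : ℝ => 1 - y) (-1) x := by
      simpa using (hasDerivAt_id x).const_sub 1
    have h2 : HasDerivAt (fun y : ℝ => Real.log (1 - y)) ((1 - x)⁻¹ * (-1)) x :=
      (Real.hasDerivAt_log hx1).comp x h1
    have h3 : HasDerivAt (fun y : ℝ => (1 - y) * Real.log (1 - y))
        ((-1) * Real.log (1 - x) + (1 - x) * ((1 - x)⁻¹ * (-1))) x := h1.mul h2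
    have h4 : HasDerivAt (fun y : ℝ => y - y ^ 2 / 2) (1 - x) x := by
      have := ((hasDerivAt_pow 2 x).div_const 2)
      have h5 := (hasDerivAt_id x).sub this
      simpa [Pi.sub_def] using h5
    have h6 := h3.add h4
    have hfe : (fun y => (1 - y) * Real.log (1 - y) + (y - y ^ 2 / 2)) = f := by
      funext y; simp only [hf]; ring
    simp only [Pi.add_def] at h6
    rw [hfe] at h6
    refine h6.congr_deriv ?_
    rw [mul_inv_cancel_left₀ hx1]
    ring
  rcases eq_or_lt_of_le h0 with h | h
  · simp [← h]
  · have hmono : MonotoneOn f (Set.Icc 0 ξ) := by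
      apply monotoneOn_of_deriv_nonneg (convex_Icc 0 ξ)
      · intro x hx
        exact ((hderiv x ⟨hx.1, lt_of_le_of_lt hx.2 h1⟩).continuousAt).continuousWithinAt
      · intro x hx
        rw [interior_Icc] at hx
        exact ((hderiv x ⟨le_of_lt hx.1, lt_of_lt_of_le (lt_of_lt_of_le hx.2 le_rfl) (le_of_lt h1) |>.trans_le le_rfl⟩).differentiableAt).differentiableWithinAt
      · intro x hx
        rw [interior_Icc] at hx
        have hx1 : x < 1 := lt_trans hx.2 h1
        rw [((hderiv x ⟨le_of_lt hx.1, hx1⟩)).deriv]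
        have hlog : Real.log (1 - x) ≤ (1 - x) - 1 :=
          Real.log_le_sub_one_of_pos (by linarith)
        linarith
    have h0f : f 0 = 0 := by simp [hf]
    have := hmono (Set.left_mem_Icc.2 (le_of_lt h)) (Set.right_mem_Icc.2 (le_of_lt h)) (le_of_lt h)
    rw [h0f] at this
    simpa [hf] using this

theorem stmt11 (p ξ : ℝ) (hp : p ∈ Set.Ioo (0 : ℝ) 1) (hξ : ξ ∈ Set.Ioo (0 : ℝ) 1)
    (n : ℕ) (γ : ℕ → ℝ)
    (hpos : ∀ ℓ : ℕ, 1 ≤ ℓ → 0 < γ ℓ)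
    (hmono : ∀ ℓ : ℕ, 1 ≤ ℓ → γ (ℓ + 1) ≤ γ ℓ) :
    ∑ k ∈ Finset.range (n + 1),
        (n.choose k : ℝ) * p ^ k * (1 - p) ^ (n - k) * (γ (k + 1)) ^ 2 ≤
      Real.exp (-(1/2) * ξ ^ 2 * p * n) * (γ 1) ^ 2 +
        (γ (⌊(1 - ξ) * p * n⌋₊ + 2)) ^ 2 := by
  obtain ⟨hp0, hp1⟩ := hp
  obtain ⟨hξ0, hξ1⟩ := hξ
  set m := ⌊(1 - ξ) * p * n⌋₊ with hm
  set w : ℕ → ℝ := fun k => (n.choose k : ℝ) * p ^ k * (1 - p) ^ (n - k) with hw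
  have hwnonneg : ∀ k, 0 ≤ w k := fun k => by
    apply mul_nonneg (mul_nonneg (by positivity) (by positivity))
    exact pow_nonneg (by linarith) _
  -- γ antitone on ℓ ≥ 1
  have hγanti : ∀ a b : ℕ, 1 ≤ a → a ≤ b → γ b ≤ γ a := by
    intro a b ha hab
    induction b with
    | zero => omega
    | succ b ih =>
      rcases Nat.lt_or_ge a (b+1) with h | h
      · exact le_trans (hmono b (by omega)) (ih (by omega))
      · have : a = b + 1 := by omega
        simp [this]
  -- termwise bound by if-then-else
  have hterm : ∀ k ∈ Finset.range (n + 1),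
      w k * (γ (k + 1)) ^ 2 ≤ (if k ≤ m then (γ 1) ^ 2 * w k else (γ (m + 2)) ^ 2 * w k) := by
    intro k _
    split_ifs with h
    · rw [mul_comm]
      apply mul_le_mul_of_nonneg_right _ (hwnonneg k)
      have h1 := hγanti 1 (k+1) le_rfl (by omega)
      have h2 := hpos (k+1) (by omega)
      nlinarith [hpos 1 le_rfl]
    · rw [mul_comm]
      apply mul_le_mul_of_nonneg_right _ (hwnonneg k)
      have h1 := hγanti (m+2) (k+1) (by omega) (by omega)
      have h2 := hpos (k+1) (by omega)
      nlinarith [hpos (m+2) (by omega)]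
  have hsum1 : ∑ k ∈ Finset.range (n + 1), w k * (γ (k + 1)) ^ 2 ≤
      (γ 1) ^ 2 * ∑ k ∈ (Finset.range (n + 1)).filter (fun k => k ≤ m), w k +
      (γ (m + 2)) ^ 2 * ∑ k ∈ (Finset.range (n + 1)).filter (fun k => ¬ k ≤ m), w k := by
    calc ∑ k ∈ Finset.range (n + 1), w k * (γ (k + 1)) ^ 2
        ≤ ∑ k ∈ Finset.range (n + 1),
            (if k ≤ m then (γ 1) ^ 2 * w k else (γ (m + 2)) ^ 2 * w k) :=
          Finset.sum_le_sum hterm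
      _ = _ := by
          rw [Finset.sum_ite, Finset.mul_sum, Finset.mul_sum]
  -- total mass is 1
  have htotal : ∑ k ∈ Finset.range (n + 1), w k = 1 := by
    have h := add_pow p (1 - p) n
    rw [show p + (1 - p) = 1 by ring, one_pow] at h
    calc ∑ k ∈ Finset.range (n + 1), w k
        = ∑ k ∈ Finset.range (n + 1), p ^ k * (1 - p) ^ (n - k) * (n.choose k : ℝ) := by
          apply Finset.sum_congr rfl; intro k _; simp only [hw]; ring
      _ = 1 := h.symm
  -- tail mass bound
  have hB : ∑ k ∈ (Finset.range (n + 1)).filter (fun k => ¬ k ≤ m), w k ≤ 1 := by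
    rw [← htotal]
    exact Finset.sum_le_sum_of_subset_of_nonneg (Finset.filter_subset _ _)
      (fun i _ _ => hwnonneg i)
  -- Chernoff bound for head mass
  set q : ℝ := 1 - ξ with hq
  have hq0 : 0 < q := by simp [hq]; linarith
  have hq1 : q < 1 := by simp [hq]; linarith
  set t : ℝ := -Real.log q with ht
  have ht0 : 0 ≤ t := by
    simp only [ht, neg_nonneg]
    exact Real.log_nonpos (le_of_lt hq0) (le_of_lt hq1)
  have hexpq : Real.exp (-t) = q := by
    simp [ht, Real.exp_log hq0]
  have hA : ∑ k ∈ (Finset.range (n + 1)).filter (fun k => k ≤ m), w k ≤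
      Real.exp (-(1/2) * ξ ^ 2 * p * n) := by
    have hstep1 : ∀ k ∈ (Finset.range (n + 1)).filter (fun k => k ≤ m),
        w k ≤ Real.exp (t * (q * p * n)) *
          ((n.choose k : ℝ) * (p * q) ^ k * (1 - p) ^ (n - k)) := by
      intro k hk
      simp only [Finset.mem_filter, Finset.mem_range] at hk
      have hkm : (k : ℝ) ≤ q * p * n := by
        have h1 : (k : ℝ) ≤ (m : ℝ) := by exact_mod_cast hk.2
        have h2 : (m : ℝ) ≤ (1 - ξ) * p * n := Nat.floor_le (by positivity)
        calc (k : ℝ) ≤ (m : ℝ) := h1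
          _ ≤ (1 - ξ) * p * n := h2
          _ = q * p * n := by rw [hq]
      have key : (1 : ℝ) ≤ Real.exp (t * (q * p * n)) * q ^ k := by
        have hqk : q ^ k = Real.exp (-(t * k)) := by
          rw [← hexpq, ← Real.exp_nat_mul]; ring_nf
        rw [hqk, ← Real.exp_add]
        have hnn : (0:ℝ) ≤ t * (q * p * n) + -(t * k) := by
          nlinarith [mul_nonneg ht0 (sub_nonneg.2 hkm)]
        calc (1:ℝ) = Real.exp 0 := Real.exp_zero.symm
          _ ≤ _ := Real.exp_le_exp.2 hnn
      calc w k = 1 * w k := (one_mul _).symm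
        _ ≤ (Real.exp (t * (q * p * n)) * q ^ k) * w k :=
            mul_le_mul_of_nonneg_right key (hwnonneg k)
        _ = Real.exp (t * (q * p * n)) *
            ((n.choose k : ℝ) * (p * q) ^ k * (1 - p) ^ (n - k)) := by
          simp only [hw]; rw [mul_pow]; ring
    have hstep2 : ∑ k ∈ (Finset.range (n + 1)).filter (fun k => k ≤ m), w k ≤
        Real.exp (t * (q * p * n)) *
          ∑ k ∈ Finset.range (n + 1), (n.choose k : ℝ) * (p * q) ^ k * (1 - p) ^ (n - k) := by
      rw [Finset.mul_sum]
      calc ∑ k ∈ (Finset.range (n + 1)).filter (fun k => k ≤ m), w k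
          ≤ ∑ k ∈ (Finset.range (n + 1)).filter (fun k => k ≤ m),
              Real.exp (t * (q * p * n)) *
                ((n.choose k : ℝ) * (p * q) ^ k * (1 - p) ^ (n - k)) :=
            Finset.sum_le_sum hstep1
        _ ≤ ∑ k ∈ Finset.range (n + 1),
              Real.exp (t * (q * p * n)) *
                ((n.choose k : ℝ) * (p * q) ^ k * (1 - p) ^ (n - k)) := by
            apply Finset.sum_le_sum_of_subset_of_nonneg (Finset.filter_subset _ _)
            intro i _ _
            apply mul_nonneg (le_of_lt (Real.exp_pos _))
            apply mul_nonneg (mul_nonneg (by positivity) (by positivity))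
            exact pow_nonneg (by linarith) _
    have hbinom : ∑ k ∈ Finset.range (n + 1), (n.choose k : ℝ) * (p * q) ^ k * (1 - p) ^ (n - k)
        = (1 - p * ξ) ^ n := by
      have h := add_pow (p * q) (1 - p) n
      rw [show p * q + (1 - p) = 1 - p * ξ by rw [hq]; ring] at h
      calc ∑ k ∈ Finset.range (n + 1), (n.choose k : ℝ) * (p * q) ^ k * (1 - p) ^ (n - k)
          = ∑ k ∈ Finset.range (n + 1), (p * q) ^ k * (1 - p) ^ (n - k) * (n.choose k : ℝ) := by
            apply Finset.sum_congr rfl; intro k _; ring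
        _ = (1 - p * ξ) ^ n := h.symm
    have hpxi : (1 : ℝ) - p * ξ ≤ Real.exp (-(p * ξ)) := by
      have := Real.add_one_le_exp (-(p * ξ))
      linarith
    have hpxi0 : (0:ℝ) ≤ 1 - p * ξ := by nlinarith
    have hpow : (1 - p * ξ) ^ n ≤ Real.exp (-(p * ξ) * n) := by
      calc (1 - p * ξ) ^ n ≤ (Real.exp (-(p * ξ))) ^ n := pow_le_pow_left₀ hpxi0 hpxi n
        _ = Real.exp (-(p * ξ) * n) := by rw [← Real.exp_nat_mul]; ring_nf
    have hexp_ineq : t * (q * p * n) + (-(p * ξ) * n) ≤ -(1/2) * ξ ^ 2 * p * n := by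
      have hf := f_nonneg (le_of_lt hξ0) hξ1
      have hn0 : (0:ℝ) ≤ n := Nat.cast_nonneg n
      have hkey : t * q - ξ ≤ -(1/2) * ξ ^ 2 := by
        simp only [ht, hq]
        nlinarith
      nlinarith [mul_le_mul_of_nonneg_right hkey (mul_nonneg (le_of_lt hp0) hn0)]
    calc ∑ k ∈ (Finset.range (n + 1)).filter (fun k => k ≤ m), w k
        ≤ Real.exp (t * (q * p * n)) * (1 - p * ξ) ^ n := by rw [← hbinom]; exact hstep2
      _ ≤ Real.exp (t * (q * p * n)) * Real.exp (-(p * ξ) * n) :=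
          mul_le_mul_of_nonneg_left hpow (le_of_lt (Real.exp_pos _))
      _ = Real.exp (t * (q * p * n) + (-(p * ξ) * n)) := (Real.exp_add _ _).symm
      _ ≤ Real.exp (-(1/2) * ξ ^ 2 * p * n) := Real.exp_le_exp.2 hexp_ineq
  -- combine
  have hγ1 : (0:ℝ) ≤ (γ 1) ^ 2 := sq_nonneg _
  have hγm : (0:ℝ) ≤ (γ (m + 2)) ^ 2 := sq_nonneg _
  calc ∑ k ∈ Finset.range (n + 1),
      (n.choose k : ℝ) * p ^ k * (1 - p) ^ (n - k) * (γ (k + 1)) ^ 2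
      = ∑ k ∈ Finset.range (n + 1), w k * (γ (k + 1)) ^ 2 := rfl
    _ ≤ (γ 1) ^ 2 * ∑ k ∈ (Finset.range (n + 1)).filter (fun k => k ≤ m), w k +
        (γ (m + 2)) ^ 2 * ∑ k ∈ (Finset.range (n + 1)).filter (fun k => ¬ k ≤ m), w k := hsum1
    _ ≤ (γ 1) ^ 2 * Real.exp (-(1/2) * ξ ^ 2 * p * n) + (γ (m + 2)) ^ 2 * 1 := by
        apply add_le_add
        · exact mul_le_mul_of_nonneg_left hA hγ1
        · exact mul_le_mul_of_nonneg_left hB hγm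
    _ = Real.exp (-(1/2) * ξ ^ 2 * p * n) * (γ 1) ^ 2 + (γ (m + 2)) ^ 2 := by ring
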